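/- A topological dynamical system with the shadowing property has uniform positive entropy if and only if it has completely positive entropy. -/

import Mathlib

open scoped Classical

/-- The lower density of a set `I ⊆ ℕ`. -/
noncomputable def lowerDensity (I : Set ℕ) : ℝ :=
  Filter.liminf (fun n => (((Finset.range n).filter (fun k => k ∈ I)).card : ℝ) / n)
    Filter.atTop

lemma lowerDensity_ge (I : Set ℕ) (c : ℝ)
    (h : ∀ᶠ n in Filter.atTop,
      c ≤ (((Finset.range n).filter (fun k => k ∈ I)).card : ℝ) / n) :
    c ≤ lowerDensity I := by
  have hub : ∀ n : ℕ, (((Finset.range n).filter (fun k => k ∈ I)).card : ℝ) / n ≤ 1 := by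
    intro k
    rcases Nat.eq_zero_or_pos k with rfl | hk
    · simp
    · rw [div_le_one (by exact_mod_cast hk)]
      exact_mod_cast le_trans (Finset.card_filter_le _ _) (le_of_eq (Finset.card_range k))
  exact Filter.le_liminf_of_le ((Filter.isBoundedUnder_of ⟨1, hub⟩).isCoboundedUnder_ge) h

lemma exists_lt_of_pos_density {I : Set ℕ} (h : 0 < lowerDensity I) :
    ∃ a ∈ I, ∃ b ∈ I, a < b := by
  by_contra hc
  push_neg at hc
  have hcard : ∀ n : ℕ, (((Finset.range n).filter (fun k => k ∈ I)).card) ≤ 1 := by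
    intro n
    refine Finset.card_le_one.mpr ?_
    intro a ha b hb
    rw [Finset.mem_filter] at ha hb
    exact le_antisymm (hc b hb.2 a ha.2) (hc a ha.2 b hb.2)
  have h0 : Filter.Tendsto
      (fun n : ℕ => (((Finset.range n).filter (fun k => k ∈ I)).card : ℝ) / n)
      Filter.atTop (nhds 0) := by
    apply squeeze_zero (fun n => by positivity) (fun n => ?_)
      tendsto_one_div_atTop_nhds_zero_nat
    rcases Nat.eq_zero_or_pos n with rfl | hn
    · simp
    · have h1 : (((Finset.range n).filter (fun k => k ∈ I)).card : ℝ) ≤ 1 := by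
        exact_mod_cast hcard n
      gcongr
  have := h0.liminf_eq
  unfold lowerDensity at h
  rw [this] at h
  exact lt_irrefl 0 h

lemma lowerDensity_multiples (p : ℕ) (hp : 0 < p) :
    (1 : ℝ) / p ≤ lowerDensity {k | p ∣ k} := by
  apply lowerDensity_ge
  filter_upwards [Filter.eventually_ge_atTop 1] with n hn
  have hn' : (0 : ℝ) < n := by exact_mod_cast hn
  rw [div_le_div_iff₀ (by exact_mod_cast hp) hn', one_mul]
  norm_cast
  rw [Nat.mul_comm]
  have himg : ∀ a ∈ (Finset.range n).image (fun k => p * (k / p)),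
      ((Finset.range n).filter (fun k => p * (k / p) = a)).card ≤ p := by
    intro a _
    have hsub2 : (Finset.range n).filter (fun k => p * (k / p) = a)
        ⊆ Finset.Ico a (a + p) := by
      intro k hk
      rw [Finset.mem_filter] at hk
      obtain ⟨_, hka⟩ := hk
      rw [Finset.mem_Ico]
      have h2 : k % p < p := Nat.mod_lt _ hp
      have h3 : p * (k / p) + k % p = k := Nat.div_add_mod k p
      omega
    calc ((Finset.range n).filter (fun k => p * (k / p) = a)).card
        ≤ (Finset.Ico a (a + p)).card := Finset.card_le_card hsub2
      _ = p := by rw [Nat.card_Ico]; omega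
  have h1 := Finset.card_le_mul_card_image (s := Finset.range n)
    (f := fun k => p * (k / p)) (n := p) himg
  rw [Finset.card_range] at h1
  refine le_trans h1 (Nat.mul_le_mul_left p (Finset.card_le_card ?_))
  intro a ha
  simp only [Finset.mem_image] at ha
  obtain ⟨k, hk, rfl⟩ := ha
  simp only [Finset.mem_filter]
  refine ⟨Finset.mem_range.mpr (lt_of_le_of_lt (Nat.mul_div_le k p) (Finset.mem_range.mp hk)), ?_⟩
  exact dvd_mul_right p (k / p)

/-- `I ⊆ ℕ` is an independence set for the pair `(A₁, A₂)`: for every finite `J ⊆ I` and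
every choice `f` of one of the two sets for each index, `⋂_{j ∈ J} T^{-j}(A_{f j}) ≠ ∅`. -/
def IsIndepSet {X : Type*} (T : X → X) (A₁ A₂ : Set X) (I : Set ℕ) : Prop :=
  ∀ J : Finset ℕ, ↑J ⊆ I → ∀ f : ℕ → Bool,
    ∃ x : X, ∀ j ∈ J, T^[j] x ∈ (if f j then A₁ else A₂)

/-- `(x₁, x₂)` is an IE-pair of `(X, T)`: every pair of open neighborhoods admits an
independence set of positive lower density. -/
def IEPair {X : Type*} [TopologicalSpace X] (T : X → X) (p : X × X) : Prop :=
  ∀ A₁ A₂ : Set X, IsOpen A₁ → IsOpen A₂ → p.1 ∈ A₁ → p.2 ∈ A₂ →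
    ∃ I : Set ℕ, IsIndepSet T A₁ A₂ I ∧ 0 < lowerDensity I

lemma isClosed_IE {X : Type*} [MetricSpace X] (T : X → X) :
    IsClosed {p : X × X | IEPair T p} := by
  refine isClosed_of_closure_subset ?_
  intro p hp
  intro A₁ A₂ h1 h2 hp1 hp2
  have hne : ((A₁ ×ˢ A₂) ∩ {p : X × X | IEPair T p}).Nonempty :=
    mem_closure_iff.mp hp (A₁ ×ˢ A₂) (h1.prod h2) ⟨hp1, hp2⟩
  obtain ⟨q, ⟨hq1, hq2⟩, hq⟩ := hne
  exact hq A₁ A₂ h1 h2 hq1 hq2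

lemma ie_diag {X : Type*} [TopologicalSpace X] {T : X → X} {x y : X}
    (h : IEPair T (x, y)) : IEPair T (x, x) := by
  intro A₁ A₂ h1 h2 hx1 hx2
  obtain ⟨I, hI, hd⟩ := h (A₁ ∩ A₂) Set.univ (h1.inter h2) isOpen_univ ⟨hx1, hx2⟩ trivial
  refine ⟨I, ?_, hd⟩
  intro J hJ f
  obtain ⟨w, hw⟩ := hI J hJ (fun _ => true)
  refine ⟨w, fun j hj => ?_⟩
  have h3 := hw j hj
  simp only [if_true] at h3
  cases hf : f j <;> simp [hf, h3.1, h3.2]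

lemma plus_collapse {Z : Type*} {E : Set (Z × Z)}
    (hE : ∀ a b c : Z, (a, b) ∈ E → (b, c) ∈ E → (a, c) ∈ E) {a b : Z}
    (h : Relation.TransGen (fun u v => (u, v) ∈ E ∪ Set.diagonal Z) a b) :
    (a, b) ∈ E ∪ Set.diagonal Z := by
  induction h with
  | single h => exact h
  | @tail b' c' h1 h2 ih =>
    rcases ih with h3 | h3 <;> rcases h2 with h4 | h4
    · exact Or.inl (hE _ _ _ h3 h4)
    · have e : b' = c' := h4
      exact Or.inl (e ▸ h3)
    · have e : a = b' := h3
      rw [show a = b' from e]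
      exact Or.inl h4
    · have e1 : a = b' := h3
      have e2 : b' = c' := h4
      exact Or.inr (e1.trans e2)

def PSeg {X : Type*} [MetricSpace X] (T : X → X) (δ : ℝ) (P Q : Set X) (L : ℕ) : Prop :=
  ∃ σ : ℕ → X, σ 0 ∈ P ∧ σ L ∈ Q ∧ ∀ t < L, dist (T (σ t)) (σ (t + 1)) ≤ δ

lemma pseg_of_orbit {X : Type*} [MetricSpace X] {T : X → X} {δ : ℝ} (hδ : 0 ≤ δ)
    {P Q : Set X} {L : ℕ} (h : ∃ u, u ∈ P ∧ T^[L] u ∈ Q) : PSeg T δ P Q L := by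
  obtain ⟨u, h1, h2⟩ := h
  refine ⟨fun t => T^[t] u, by simpa using h1, h2, fun t _ => ?_⟩
  show dist (T (T^[t] u)) (T^[t + 1] u) ≤ δ
  rw [← Function.iterate_succ_apply' T t u]
  simpa using hδ

lemma pseg_comp {X : Type*} [MetricSpace X] {T : X → X} {δ : ℝ} {P Q R : Set X} {L L' : ℕ}
    (hL : 0 < L) (hQ : ∀ q ∈ Q, ∀ q' ∈ Q, dist q q' ≤ δ)
    (h1 : ∃ u, u ∈ P ∧ T^[L] u ∈ Q) (h2 : PSeg T δ Q R L') : PSeg T δ P R (L + L') := by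
  obtain ⟨u, hu, huL⟩ := h1
  obtain ⟨σ, hσ0, hσL, hστ⟩ := h2
  refine ⟨fun t => if t < L then T^[t] u else σ (t - L), ?_, ?_, ?_⟩
  · simpa [hL] using hu
  · have hnot : ¬ L + L' < L := by omega
    have he : L + L' - L = L' := by omega
    simpa [hnot, he] using hσL
  · intro t ht
    by_cases h : t + 1 < L
    · have ht' : t < L := by omega
      simp only [ht', h, if_pos]
      show dist (T (T^[t] u)) (T^[t + 1] u) ≤ δ
      rw [← Function.iterate_succ_apply' T t u]
      simp
      have : (0:ℝ) ≤ δ := le_trans dist_nonneg (hQ _ huL _ huL)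
      linarith
    · by_cases h' : t < L
      · have hL1 : t + 1 = L := by omega
        simp only [h', if_pos, if_neg h]
        have e : T (T^[t] u) = T^[L] u := by
          rw [← Function.iterate_succ_apply' T t u]
          exact congrArg (fun k => T^[k] u) hL1
        rw [e, (by omega : t + 1 - L = 0)]
        exact hQ _ huL _ hσ0
      · have h'' : ¬ t + 1 < L := by omega
        simp only [if_neg h', if_neg h'']
        have e1 : t + 1 - L = (t - L) + 1 := by omega
        rw [e1]
        exact hστ (t - L) (by omega)

lemma move_of_indep {X : Type*} {T : X → X} {A B : Set X} {I : Set ℕ} (hI : IsIndepSet T A B I)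
    {c d : ℕ} (hc : c ∈ I) (hd : d ∈ I) (hcd : c < d) (s e : Bool) :
    ∃ u, u ∈ (if s then A else B) ∧ T^[d - c] u ∈ (if e then A else B) := by
  obtain ⟨w, hw⟩ := hI {c, d}
    (by intro k hk; simp only [Finset.coe_insert, Finset.coe_singleton, Set.mem_insert_iff,
          Set.mem_singleton_iff] at hk
        rcases hk with rfl | rfl; exacts [hc, hd])
    (fun k => if k = c then s else e)
  refine ⟨T^[c] w, ?_, ?_⟩
  · have := hw c (by simp)
    simpa using this
  · have := hw d (by simp)
    have hne : d ≠ c := Nat.ne_of_gt hcd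
    rw [← Function.iterate_add_apply T (d - c) c w] at *
    rw [(by omega : d - c + c = d)]
    simpa [hne] using this

/-- The transitive closure `F⁺`. -/
def plusSet {Z : Type*} (F : Set (Z × Z)) : Set (Z × Z) :=
  {p | Relation.TransGen (fun u v => (u, v) ∈ F) p.1 p.2}

/-- The shadowing property. -/
def HasShadowing {X : Type*} [MetricSpace X] (T : X → X) : Prop :=
  ∀ ε > (0 : ℝ), ∃ δ > (0 : ℝ), ∀ x : ℕ → X,
    (∀ n, dist (T (x n)) (x (n + 1)) ≤ δ) →
    ∃ y : X, ∀ n, dist (x n) (T^[n] y) ≤ ε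

lemma ie_trans {X : Type*} [MetricSpace X] {T : X → X} (hshad : HasShadowing T)
    {x y z : X} (hxy : IEPair T (x, y)) (hyz : IEPair T (y, z)) : IEPair T (x, z) := by
  intro A C hA hC hxA hzC
  obtain ⟨εA, hεA, hAsub⟩ := Metric.isOpen_iff.mp hA x hxA
  obtain ⟨εC, hεC, hCsub⟩ := Metric.isOpen_iff.mp hC z hzC
  set ε : ℝ := min εA εC / 3 with hε_def
  have hminAC : 0 < min εA εC := lt_min hεA hεC
  have hε : 0 < ε := by rw [hε_def]; linarith
  have hεA3 : 3 * ε ≤ εA := by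
    have := min_le_left εA εC; rw [hε_def]; linarith
  have hεC3 : 3 * ε ≤ εC := by
    have := min_le_right εA εC; rw [hε_def]; linarith
  obtain ⟨δ, hδ, hsh⟩ := hshad ε hε
  set η : ℝ := min δ ε / 4 with hη_def
  have hmin1 : min δ ε ≤ δ := min_le_left _ _
  have hmin2 : min δ ε ≤ ε := min_le_right _ _
  have hminδε : 0 < min δ ε := lt_min hδ hε
  have hη : 0 < η := by rw [hη_def]; linarith
  have h2η : 2 * η ≤ δ := by rw [hη_def]; linarith
  have h4η : 4 * η ≤ δ := by rw [hη_def]; linarith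
  have hηε : η ≤ ε := by rw [hη_def]; linarith
  have h2η0 : (0 : ℝ) ≤ 2 * η := by linarith
  obtain ⟨I₁, hI₁, hd₁⟩ := hxy (Metric.ball x η) (Metric.ball y η)
    Metric.isOpen_ball Metric.isOpen_ball (Metric.mem_ball_self hη) (Metric.mem_ball_self hη)
  obtain ⟨I₂, hI₂, hd₂⟩ := hyz (Metric.ball y η) (Metric.ball z η)
    Metric.isOpen_ball Metric.isOpen_ball (Metric.mem_ball_self hη) (Metric.mem_ball_self hη)
  obtain ⟨c, hcI, d, hdI, hcd⟩ := exists_lt_of_pos_density hd₁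
  obtain ⟨a, haI, b, hbI, hab⟩ := exists_lt_of_pos_density hd₂
  set n : ℕ := d - c with hn_def
  set m : ℕ := b - a with hm_def
  have hn : 0 < n := by omega
  have hm : 0 < m := by omega
  have hsmall : ∀ w : X, ∀ q ∈ Metric.ball w η, ∀ q' ∈ Metric.ball w η,
      dist q q' ≤ 2 * η := by
    intro w q hq q' hq'
    rw [Metric.mem_ball] at hq hq'
    calc dist q q' ≤ dist q w + dist w q' := dist_triangle q w q'
      _ ≤ 2 * η := by rw [dist_comm w q']; linarith
  have mvXX : ∃ u, u ∈ Metric.ball x η ∧ T^[n] u ∈ Metric.ball x η := by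
    simpa using move_of_indep hI₁ hcI hdI hcd true true
  have mvXY : ∃ u, u ∈ Metric.ball x η ∧ T^[n] u ∈ Metric.ball y η := by
    simpa using move_of_indep hI₁ hcI hdI hcd true false
  have mvYX : ∃ u, u ∈ Metric.ball y η ∧ T^[n] u ∈ Metric.ball x η := by
    simpa using move_of_indep hI₁ hcI hdI hcd false true
  have mvYZ : ∃ u, u ∈ Metric.ball y η ∧ T^[m] u ∈ Metric.ball z η := by
    simpa using move_of_indep hI₂ haI hbI hab true false
  have mvZY : ∃ u, u ∈ Metric.ball z η ∧ T^[m] u ∈ Metric.ball y η := by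
    simpa using move_of_indep hI₂ haI hbI hab false true
  have mvZZ : ∃ u, u ∈ Metric.ball z η ∧ T^[m] u ∈ Metric.ball z η := by
    simpa using move_of_indep hI₂ haI hbI hab false false
  set p : ℕ := n + (m + (m + n)) with hp_def
  have hp : 0 < p := by omega
  have hifsmall : ∀ s : Bool, ∀ q ∈ (if s then Metric.ball x η else Metric.ball z η),
      ∀ q' ∈ (if s then Metric.ball x η else Metric.ball z η), dist q q' ≤ 2 * η := by
    intro s
    cases s
    · simpa using hsmall z
    · simpa using hsmall x
  have super : ∀ s s' : Bool, PSeg T (2 * η) (if s then Metric.ball x η else Metric.ball z η)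
      (if s' then Metric.ball x η else Metric.ball z η) p := by
    intro s s'
    cases s <;> cases s'
    · -- Z → Z
      have h := pseg_comp hm (hsmall y) mvZY (pseg_comp hn (hsmall x) mvYX
        (pseg_comp hn (hsmall y) mvXY (pseg_of_orbit h2η0 mvYZ)))
      have e : m + (n + (n + m)) = p := by omega
      rw [e] at h
      simpa using h
    · -- Z → X
      have h := pseg_comp hm (hsmall z) mvZZ (pseg_comp hm (hsmall y) mvZY
        (pseg_comp hn (hsmall x) mvYX (pseg_of_orbit h2η0 mvXX)))
      have e : m + (m + (n + n)) = p := by omega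
      rw [e] at h
      simpa using h
    · -- X → Z
      have h := pseg_comp hn (hsmall x) mvXX (pseg_comp hn (hsmall y) mvXY
        (pseg_comp hm (hsmall z) mvYZ (pseg_of_orbit h2η0 mvZZ)))
      have e : n + (n + (m + m)) = p := by omega
      rw [e] at h
      simpa using h
    · -- X → X
      have h := pseg_comp hn (hsmall y) mvXY (pseg_comp hm (hsmall z) mvYZ
        (pseg_comp hm (hsmall y) mvZY (pseg_of_orbit h2η0 mvYX)))
      have e : n + (m + (m + n)) = p := by omega
      rw [e] at h
      simpa using h
  refine ⟨{k | p ∣ k}, ?_, lt_of_lt_of_le (one_div_pos.mpr (by exact_mod_cast hp))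
    (lowerDensity_multiples p hp)⟩
  intro J hJ f
  choose σ hσ0 hσp hσstep using fun i => super (f (i * p)) (f ((i + 1) * p))
  have hpseudo : ∀ t, dist (T ((fun t => σ (t / p) (t % p)) t))
      ((fun t => σ (t / p) (t % p)) (t + 1)) ≤ δ := by
    intro t
    simp only []
    have ht := Nat.div_add_mod t p
    have hrlt : t % p < p := Nat.mod_lt _ hp
    rcases Nat.lt_or_ge (t % p + 1) p with h | h
    · have h1 : t + 1 = p * (t / p) + (t % p + 1) := by omega
      have e1 : (t + 1) / p = t / p := by
        rw [h1, Nat.mul_add_div hp, Nat.div_eq_of_lt h, Nat.add_zero]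
      have e2 : (t + 1) % p = t % p + 1 := by
        rw [h1, Nat.mul_add_mod, Nat.mod_eq_of_lt h]
      rw [e1, e2]
      exact le_trans (hσstep (t / p) (t % p) hrlt) h2η
    · have hrp : t % p + 1 = p := by omega
      have h1 : t + 1 = p * (t / p + 1) := by rw [Nat.mul_add, Nat.mul_one]; omega
      have e1 : (t + 1) / p = t / p + 1 := by
        rw [h1, Nat.mul_div_cancel_left _ hp]
      have e2 : (t + 1) % p = 0 := by rw [h1]; exact Nat.mul_mod_right p _
      rw [e1, e2]
      have d1 : dist (T (σ (t / p) (t % p))) (σ (t / p) (t % p + 1)) ≤ 2 * η :=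
        hσstep (t / p) (t % p) hrlt
      have hmem1 : σ (t / p) (t % p + 1) ∈
          (if f ((t / p + 1) * p) then Metric.ball x η else Metric.ball z η) := by
        rw [hrp]; exact hσp (t / p)
      have hmem2 : σ (t / p + 1) 0 ∈
          (if f ((t / p + 1) * p) then Metric.ball x η else Metric.ball z η) :=
        hσ0 (t / p + 1)
      have d2 : dist (σ (t / p) (t % p + 1)) (σ (t / p + 1) 0) ≤ 2 * η :=
        hifsmall _ _ hmem1 _ hmem2
      calc dist (T (σ (t / p) (t % p))) (σ (t / p + 1) 0)
          ≤ dist (T (σ (t / p) (t % p))) (σ (t / p) (t % p + 1)) +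
            dist (σ (t / p) (t % p + 1)) (σ (t / p + 1) 0) :=
            dist_triangle _ _ _
        _ ≤ 2 * η + 2 * η := add_le_add d1 d2
        _ ≤ δ := by linarith
  obtain ⟨w, hw⟩ := hsh (fun t => σ (t / p) (t % p)) hpseudo
  refine ⟨w, fun j hj => ?_⟩
  obtain ⟨i, rfl⟩ : p ∣ j := hJ hj
  have e1 : p * i / p = i := by rw [Nat.mul_div_cancel_left _ hp]
  have e2 : (p * i) % p = 0 := Nat.mul_mod_right p i
  have hx0 := hσ0 i
  rw [mul_comm i p] at hx0
  have hwj := hw (p * i)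
  rw [e1, e2] at hwj
  cases hf : f (p * i)
  · rw [hf] at hx0
    simp only [Bool.false_eq_true, if_false] at hx0 ⊢
    apply hCsub
    rw [Metric.mem_ball] at hx0 ⊢
    have : dist (T^[p * i] w) z ≤ dist (T^[p * i] w) (σ i 0) + dist (σ i 0) z :=
      dist_triangle _ _ _
    rw [dist_comm] at hwj
    linarith
  · rw [hf] at hx0
    simp only [if_true] at hx0 ⊢
    apply hAsub
    rw [Metric.mem_ball] at hx0 ⊢
    have : dist (T^[p * i] w) x ≤ dist (T^[p * i] w) (σ i 0) + dist (σ i 0) x :=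
      dist_triangle _ _ _
    rw [dist_comm] at hwj
    linarith

/-- `Γ(E) = closure (E⁺ ∪ Δ_X)`. -/
def GammaStep {X : Type*} [TopologicalSpace X] (E : Set (X × X)) : Set (X × X) :=
  closure (plusSet E ∪ Set.diagonal X)

/-- Transfinite iteration of `Γ`. -/
noncomputable def GammaIter {X : Type*} [TopologicalSpace X] (E : Set (X × X)) (o : Ordinal.{0}) :
    Set (X × X) :=
  Ordinal.limitRecOn o E (fun _ ih => GammaStep ih)
    (fun o _ ih => closure (⋃ b : {b : Ordinal // b < o}, ih b.1 b.2))

/-- `(X,T)` has uniform positive entropy: every pair is an IE-pair. -/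
def HasUPE {X : Type*} [TopologicalSpace X] (T : X → X) : Prop :=
  {p : X × X | IEPair T p} = Set.univ

/-- `(X,T)` has completely positive entropy: `Γ^α(E(X,T)) = X²` for some countable ordinal. -/
def HasCPE {X : Type*} [TopologicalSpace X] (T : X → X) : Prop :=
  ∃ α : Ordinal.{0}, α.card ≤ Cardinal.aleph0 ∧
    GammaIter {p : X × X | IEPair T p} α = Set.univ

/-- A TDS with the shadowing property has UPE if and only if it has CPE. -/
theorem stmt3 {X : Type*} [MetricSpace X] [CompactSpace X] (T : X → X)
    (hT : Continuous T) (hshad : HasShadowing T) :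
    HasUPE T ↔ HasCPE T := by
  constructor
  · intro h
    refine ⟨0, by simp, ?_⟩
    rw [show GammaIter {p : X × X | IEPair T p} 0 = {p : X × X | IEPair T p} from
      Ordinal.limitRecOn_zero _ _ _]
    exact h
  · rintro ⟨α, _hcard, hα⟩
    have hEtrans : ∀ a b c : X, (a, b) ∈ {p : X × X | IEPair T p} →
        (b, c) ∈ {p : X × X | IEPair T p} → (a, c) ∈ {p : X × X | IEPair T p} :=
      fun a b c h1 h2 => ie_trans hshad h1 h2
    have hclosed : IsClosed ({p : X × X | IEPair T p} ∪ Set.diagonal X) :=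
      (isClosed_IE T).union isClosed_diagonal
    have hsub : ∀ o : Ordinal.{0}, GammaIter {p : X × X | IEPair T p} o ⊆
        {p : X × X | IEPair T p} ∪ Set.diagonal X := by
      intro o
      induction o using Ordinal.limitRecOn with
      | zero =>
        rw [show GammaIter {p : X × X | IEPair T p} 0 = {p : X × X | IEPair T p} from
          Ordinal.limitRecOn_zero _ _ _]
        exact Set.subset_union_left
      | add_one o ih =>
        rw [show GammaIter {p : X × X | IEPair T p} (o + 1) =
            GammaStep (GammaIter {p : X × X | IEPair T p} o) from
          Ordinal.limitRecOn_add_one _ _ _ _]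
        refine hclosed.closure_subset_iff.mpr ?_
        refine Set.union_subset ?_ Set.subset_union_right
        intro q hq
        exact plus_collapse hEtrans (Relation.TransGen.mono (fun u v huv => ih huv) _ _ hq)
      | limit o ho ih =>
        rw [show GammaIter {p : X × X | IEPair T p} o =
            closure (⋃ b : {b : Ordinal // b < o}, GammaIter {p : X × X | IEPair T p} b.1) from
          Ordinal.limitRecOn_limit _ _ _ _ ho]
        refine hclosed.closure_subset_iff.mpr ?_
        exact Set.iUnion_subset fun b => ih b.1 b.2
    have hall : ∀ q : X × X, q ∈ {p : X × X | IEPair T p} ∪ Set.diagonal X := by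
      intro q
      have h' := hsub α
      rw [hα] at h'
      exact h' (Set.mem_univ q)
    apply Set.eq_univ_of_forall
    rintro ⟨q1, q2⟩
    rcases hall (q1, q2) with h | h
    · exact h
    · have hq : q1 = q2 := h
      subst hq
      show IEPair T (q1, q1)
      by_cases hex : ∃ w : X, w ≠ q1
      · obtain ⟨w, hwq⟩ := hex
        rcases hall (q1, w) with h' | h'
        · exact ie_diag h'
        · exact absurd (h' : q1 = w).symm hwq
      · push_neg at hex
        intro A₁ A₂ h1 h2 hm1 hm2
        refine ⟨Set.univ, ?_, ?_⟩
        · intro J hJ f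
          refine ⟨q1, fun j hj => ?_⟩
          rw [show T^[j] q1 = q1 from hex _]
          cases hf : f j <;> simp [hf, hm1, hm2]
        · have h1' : (1 : ℝ) ≤ lowerDensity Set.univ := by
            apply lowerDensity_ge
            filter_upwards [Filter.eventually_ge_atTop 1] with k hk
            have hk' : (0 : ℝ) < k := by exact_mod_cast hk
            rw [le_div_iff₀ hk', one_mul]
            norm_cast
            refine le_trans (le_of_eq (Finset.card_range k).symm) (Finset.card_le_card ?_)
            intro j hj
            simp only [Finset.mem_filter]
            exact ⟨hj, trivial⟩
          linarith
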